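/- A code C ⊆ {0,1}^α × (Z/4Z)^β is closed under coordinatewise addition (mod 2 on the first α coordinates, mod 4 on the last β coordinates) if and only if its Gray image Φ(C) ⊆ {0,1}^{α+2β} is closed under the operation *_π, where π is the involution swapping coordinates α+2k and α+2k+1 for each k = 0,...,β-1 and fixing the first α coordinates. -/

import Mathlib

/-- The `Z₂Z₄` operation `x *_π y = x + y + (x + π(x))·(y + π(y))` on `(Z/2Z)^n`. -/
def star {n : ℕ} (π : Fin n → Fin n) (x y : Fin n → ZMod 2) : Fin n → ZMod 2 :=
  x + y + (x + x ∘ π) * (y + y ∘ π)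

/-- `φ : Z/4Z → (Z/2Z)²` with `φ(0)=(0,0)`, `φ(1)=(0,1)`, `φ(2)=(1,1)`, `φ(3)=(1,0)`. -/
def phi (q : ZMod 4) : ZMod 2 × ZMod 2 :=
  (if 2 ≤ q.val then 1 else 0, if q.val = 1 ∨ q.val = 2 then 1 else 0)

/-- The Gray map `Φ : {0,1}^α × (Z/4Z)^β → {0,1}^{α+2β}`. -/
def gray {α β : ℕ} (x : (Fin α → ZMod 2) × (Fin β → ZMod 4)) :
    Fin (α + 2 * β) → ZMod 2 :=
  fun i =>
    if h : (i : ℕ) < α then x.1 ⟨i, h⟩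
    else if ((i : ℕ) - α) % 2 = 0 then
      (phi (x.2 ⟨((i : ℕ) - α) / 2, by have := i.isLt; omega⟩)).1
    else
      (phi (x.2 ⟨((i : ℕ) - α) / 2, by have := i.isLt; omega⟩)).2

/-- The involution of `{0,...,α+2β-1}` fixing the first `α` coordinates and
swapping coordinates `α+2k` and `α+2k+1` for each `k < β`. -/
def pairSwap {α β : ℕ} : Fin (α + 2 * β) → Fin (α + 2 * β) :=
  fun i =>
    if h : (i : ℕ) < α then i
    else if h2 : ((i : ℕ) - α) % 2 = 0 then ⟨(i : ℕ) + 1, by have := i.isLt; omega⟩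
    else ⟨(i : ℕ) - 1, by have := i.isLt; omega⟩

lemma phi_inj : Function.Injective phi := by decide

lemma phi_add_fst (q r : ZMod 4) :
    (phi q).1 + (phi r).1 + ((phi q).1 + (phi q).2) * ((phi r).1 + (phi r).2)
      = (phi (q + r)).1 := by
  revert q r; decide

lemma phi_add_snd (q r : ZMod 4) :
    (phi q).2 + (phi r).2 + ((phi q).2 + (phi q).1) * ((phi r).2 + (phi r).1)
      = (phi (q + r)).2 := by
  revert q r; decide

lemma gray_lt {α β : ℕ} (x : (Fin α → ZMod 2) × (Fin β → ZMod 4)) (i : Fin (α + 2 * β))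
    (h : (i : ℕ) < α) : gray x i = x.1 ⟨i, h⟩ := by simp [gray, h]

lemma gray_even {α β : ℕ} (x : (Fin α → ZMod 2) × (Fin β → ZMod 4)) (i : Fin (α + 2 * β))
    (h : ¬ (i : ℕ) < α) (he : ((i : ℕ) - α) % 2 = 0) :
    gray x i = (phi (x.2 ⟨((i : ℕ) - α) / 2, by have := i.isLt; omega⟩)).1 := by
  simp [gray, h, he]

lemma gray_odd {α β : ℕ} (x : (Fin α → ZMod 2) × (Fin β → ZMod 4)) (i : Fin (α + 2 * β))
    (h : ¬ (i : ℕ) < α) (he : ¬ ((i : ℕ) - α) % 2 = 0) :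
    gray x i = (phi (x.2 ⟨((i : ℕ) - α) / 2, by have := i.isLt; omega⟩)).2 := by
  simp [gray, h, he]

lemma star_gray {α β : ℕ} (x y : (Fin α → ZMod 2) × (Fin β → ZMod 4)) :
    star (pairSwap (α := α) (β := β)) (gray x) (gray y) = gray (x + y) := by
  funext i
  unfold _root_.star
  simp only [Pi.add_apply, Pi.mul_apply, Function.comp_apply]
  by_cases h : (i : ℕ) < α
  · have hπ : pairSwap (α := α) (β := β) i = i := by simp [pairSwap, h]
    rw [hπ, gray_lt x i h, gray_lt y i h, gray_lt (x + y) i h]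
    simp [CharTwo.add_self_eq_zero, Prod.fst_add]
  · by_cases he : ((i : ℕ) - α) % 2 = 0
    · have hπ : pairSwap (α := α) (β := β) i
          = ⟨(i : ℕ) + 1, by have := i.isLt; omega⟩ := by
        simp [pairSwap, h, he]
      have h1 : ¬ (((⟨(i : ℕ) + 1, by have := i.isLt; omega⟩ : Fin (α + 2 * β)) : ℕ) < α) := by
        simp only [Fin.val_mk]; omega
      have h2 : ¬ ((((⟨(i : ℕ) + 1, by have := i.isLt; omega⟩ : Fin (α + 2 * β)) : ℕ) - α) % 2
          = 0) := by
        simp only [Fin.val_mk]; omega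
      simp only [hπ, gray_even x i h he, gray_even y i h he, gray_even (x + y) i h he,
        gray_odd x _ h1 h2, gray_odd y _ h1 h2]
      have hkk : ∀ p q, (⟨(((⟨(i : ℕ) + 1, p⟩ : Fin (α + 2 * β)) : ℕ) - α) / 2, q⟩ : Fin β)
          = ⟨((i : ℕ) - α) / 2, by have := i.isLt; omega⟩ := by
        intro p q; apply Fin.ext; simp only [Fin.val_mk]; omega
      simp only [hkk]
      exact phi_add_fst _ _
    · have hπ : pairSwap (α := α) (β := β) i
          = ⟨(i : ℕ) - 1, by have := i.isLt; omega⟩ := by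
        simp [pairSwap, h, he]
      have h1 : ¬ (((⟨(i : ℕ) - 1, by have := i.isLt; omega⟩ : Fin (α + 2 * β)) : ℕ) < α) := by
        simp only [Fin.val_mk]; omega
      have h2 : ((((⟨(i : ℕ) - 1, by have := i.isLt; omega⟩ : Fin (α + 2 * β)) : ℕ) - α) % 2
          = 0) := by
        simp only [Fin.val_mk]; omega
      simp only [hπ, gray_odd x i h he, gray_odd y i h he, gray_odd (x + y) i h he,
        gray_even x _ h1 h2, gray_even y _ h1 h2]
      have hkk : ∀ p q, (⟨(((⟨(i : ℕ) - 1, p⟩ : Fin (α + 2 * β)) : ℕ) - α) / 2, q⟩ : Fin β)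
          = ⟨((i : ℕ) - α) / 2, by have := i.isLt; omega⟩ := by
        intro p q; apply Fin.ext; simp only [Fin.val_mk]; omega
      simp only [hkk]
      exact phi_add_snd _ _

lemma gray_inj {α β : ℕ} : Function.Injective (gray (α := α) (β := β)) := by
  intro x y h
  refine Prod.ext (funext fun j => ?_) (funext fun k => ?_)
  · have := congrFun h ⟨(j : ℕ), by omega⟩
    rw [gray_lt x _ j.isLt, gray_lt y _ j.isLt] at this
    simpa using this
  · have hE := congrFun h ⟨α + 2 * (k : ℕ), by omega⟩
    have hO := congrFun h ⟨α + 2 * (k : ℕ) + 1, by omega⟩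
    rw [gray_even x _ (by simp only [Fin.val_mk]; omega) (by simp only [Fin.val_mk]; omega),
        gray_even y _ (by simp only [Fin.val_mk]; omega)
          (by simp only [Fin.val_mk]; omega)] at hE
    rw [gray_odd x _ (by simp only [Fin.val_mk]; omega) (by simp only [Fin.val_mk]; omega),
        gray_odd y _ (by simp only [Fin.val_mk]; omega)
          (by simp only [Fin.val_mk]; omega)] at hO
    have ek : ∀ (p : (α + 2 * (k : ℕ) - α) / 2 < β), (⟨(((⟨α + 2 * (k : ℕ), by omega⟩ : Fin (α + 2 * β)) : ℕ) - α) / 2, p⟩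
        : Fin β) = k := by
      intro p; apply Fin.ext; simp only [Fin.val_mk]; omega
    have ok : ∀ (p : (α + 2 * (k : ℕ) + 1 - α) / 2 < β), (⟨(((⟨α + 2 * (k : ℕ) + 1, by omega⟩ : Fin (α + 2 * β)) : ℕ) - α) / 2, p⟩
        : Fin β) = k := by
      intro p; apply Fin.ext; simp only [Fin.val_mk]; omega
    simp only [ek, ok] at hE hO
    exact phi_inj (Prod.ext hE hO)

/-- a code `C ⊆ {0,1}^α × (Z/4Z)^β` is additive (closed under
coordinatewise addition, mod 2 on the binary part and mod 4 on the quaternary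
part) iff its Gray image is closed under `*_π` with `π` the pair-swapping
involution. -/
theorem additive_iff_grayImage_closed {α β : ℕ}
    (C : Set ((Fin α → ZMod 2) × (Fin β → ZMod 4))) :
    (∀ x ∈ C, ∀ y ∈ C, x + y ∈ C) ↔
      (∀ a ∈ gray '' C, ∀ b ∈ gray '' C, star (pairSwap (α := α) (β := β)) a b ∈ gray '' C) := by
  constructor
  · rintro hC a ⟨x, hx, rfl⟩ b ⟨y, hy, rfl⟩
    exact ⟨x + y, hC x hx y hy, (star_gray x y).symm⟩
  · intro h x hx y hy
    obtain ⟨z, hz, hzeq⟩ := h _ ⟨x, hx, rfl⟩ _ ⟨y, hy, rfl⟩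
    rw [star_gray] at hzeq
    exact gray_inj hzeq ▸ hz
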